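/- (Proposition 3(2): BPR comparative statics under conflicting preferences.) Assume λ and c are twice continuously differentiable on their domains, fix d_B < 0, and let I ⊆ (0, +∞) be an open interval. Suppose a, b : I → (0,1) are differentiable functions such that for every t ∈ I the profile (a(t), b(t)) is an interior Nash equilibrium for parameters d_A = t and d_B, i.e., λ(a(t)) + (2/t²)·c'(a(t))/λ'(a(t)) = 2 − λ(b(t))·d_B/t and λ(b(t)) + (2/d_B²)·c'(b(t))/λ'(b(t)) = 2 − λ(a(t))·t/d_B for all t ∈ I. Then a'(t) > 0 and b'(t) > 0 on I: with conflicting preferences, each member's equilibrium revelation increases with both members' diversity. -/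

import Mathlib

open Set Filter

/-- Team decision formed by the two digital representatives. -/
noncomputable def teamDec (lam : ℝ → ℝ) (thA thB mu : ℝ) (aA aB : ℝ) : ℝ :=
  (lam aA * thA + (1 - lam aA) * mu + lam aB * thB + (1 - lam aB) * mu) / 2

/-- Alice's total loss: preference loss plus communication cost. -/
noncomputable def lossA (lam c : ℝ → ℝ) (thA thB mu : ℝ) (aA aB : ℝ) : ℝ :=
  (thA - teamDec lam thA thB mu aA aB) ^ 2 + c aA

/-- Bob's total loss: preference loss plus communication cost. -/
noncomputable def lossB (lam c : ℝ → ℝ) (thA thB mu : ℝ) (aA aB : ℝ) : ℝ :=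
  (thB - teamDec lam thA thB mu aA aB) ^ 2 + c aB

/-- The function `f_m(α) = λ(α) + (2/d_m²)·c'(α)/λ'(α)`. -/
noncomputable def fFun (lam lam' c' : ℝ → ℝ) (d : ℝ) (α : ℝ) : ℝ :=
  lam α + (2 / d ^ 2) * (c' α / lam' α)

/-- The function `h_m(α) = 2 − λ(α)·d_{−m}/d_m`. -/
noncomputable def hFun (lam : ℝ → ℝ) (dm dOther : ℝ) (α : ℝ) : ℝ :=
  2 - lam α * dOther / dm

/-- `a` is a best response of Alice to Bob's revelation `aB`:
it minimizes `α ↦ L_A(α, aB)` over `[0,1)`. -/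
def IsBestRespA (lam c : ℝ → ℝ) (thA thB mu : ℝ) (a aB : ℝ) : Prop :=
  a ∈ Set.Ico (0:ℝ) 1 ∧
    ∀ x ∈ Set.Ico (0:ℝ) 1, lossA lam c thA thB mu a aB ≤ lossA lam c thA thB mu x aB

/-- Nash equilibrium of the digital representative game. -/
def IsNashEq (lam c : ℝ → ℝ) (thA thB mu : ℝ) (aA aB : ℝ) : Prop :=
  aA ∈ Set.Ico (0:ℝ) 1 ∧ aB ∈ Set.Ico (0:ℝ) 1 ∧
  (∀ α ∈ Set.Ico (0:ℝ) 1, lossA lam c thA thB mu aA aB ≤ lossA lam c thA thB mu α aB) ∧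
  (∀ α ∈ Set.Ico (0:ℝ) 1, lossB lam c thA thB mu aA aB ≤ lossB lam c thA thB mu aA α)

/-- Proposition 3(2): BPR comparative statics, conflicting preferences.
Along a differentiable family of interior equilibria parameterized by Alice's diversity
`d_A = t > 0` with fixed `d_B < 0`, both members' revelations strictly increase in `t`. -/
lemma deriv_nonneg_of_monoOn {f : ℝ → ℝ} {d u v x : ℝ} (hx : x ∈ Set.Ioo u v)
    (hm : ∀ p ∈ Set.Ioo u v, ∀ q ∈ Set.Ioo u v, p ≤ q → f p ≤ f q)
    (hd : HasDerivAt f d x) : 0 ≤ d := by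
  have h := hasDerivAt_iff_tendsto_slope.1 hd
  have h2 : Tendsto (slope f x) (nhdsWithin x (Set.Ioi x)) (nhds d) :=
    h.mono_left (nhdsWithin_mono x fun y hy => ne_of_gt hy)
  refine ge_of_tendsto h2 ?_
  filter_upwards [Ioo_mem_nhdsGT_of_mem ⟨le_refl x, hx.2⟩] with y hy
  have hfy : f x ≤ f y := hm x hx y ⟨lt_trans hx.1 hy.1, hy.2⟩ (le_of_lt hy.1)
  rw [slope_def_field]
  exact div_nonneg (by linarith) (by linarith [hy.1])

lemma endgame (t dB x y LA LB lamA lamB QA QB CA : ℝ)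
    (ht : 0 < t) (hdB : dB < 0) (hLA : 0 < LA) (hLB : 0 < LB)
    (hlamA0 : 0 < lamA) (hlamA1 : lamA < 1) (hlamB0 : 0 < lamB)
    (hQA : 0 ≤ QA) (hQB : 0 ≤ QB) (hCA : 0 < CA)
    (hE1 : (t^3*LA^3 + 2*t*QA)*x + dB*LB*t^2*LA^2*y = 4*CA*LA + lamB*dB*t*LA^2)
    (hE2 : (dB^2*LB^3 + 2*QB)*y + dB*t*LA*LB^2*x = -(dB*LB^2*lamA))
    (hfA : lamA*t^2*LA + 2*CA = 2*t^2*LA - lamB*dB*t*LA) :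
    0 < x ∧ 0 < y := by
  set PA := t^3*LA^3 + 2*t*QA with hPAdef
  set PB := dB^2*LB^3 + 2*QB with hPBdef
  have hdB2 : 0 < dB^2 := by nlinarith
  have hPA : 0 < PA := by
    have h1 : 0 < t^3*LA^3 := by positivity
    have h2 : 0 ≤ 2*t*QA := by positivity
    rw [hPAdef]; linarith
  have hPB : 0 < PB := by
    have h1 : 0 < dB^2*LB^3 := by positivity
    have h2 : 0 ≤ 2*QB := by positivity
    rw [hPBdef]; linarith
  set RA := (4 - 2*lamA)*t - lamB*dB with hRAdef
  have hRA : 0 < RA := by nlinarith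
  have hE1' : PA*x + dB*LB*t^2*LA^2*y = LA^2*t*RA := by
    rw [hRAdef]; linear_combination hE1 + 2*LA*hfA
  set D := PA*PB - dB^2*t^3*LA^3*LB^3 with hDdef
  have hD : 0 ≤ D := by
    have h1 : 0 ≤ t^3*LA^3*(2*QB) := by positivity
    have h2 : 0 ≤ 2*t*QA*(dB^2*LB^3) := by positivity
    have h3 : 0 ≤ 2*t*QA*(2*QB) := by positivity
    rw [hDdef, hPAdef, hPBdef]; nlinarith
  have hx : D*x = PB*(LA^2*t*RA) + dB^2*t^2*LA^2*LB^3*lamA := by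
    rw [hDdef]; linear_combination PB*hE1' - dB*LB*t^2*LA^2*hE2
  have hy : D*y = -dB*(PA*LB^2*lamA + t^2*LA^3*LB^2*RA) := by
    rw [hDdef]; linear_combination PA*hE2 - dB*t*LA*LB^2*hE1'
  have hxr : 0 < PB*(LA^2*t*RA) + dB^2*t^2*LA^2*LB^3*lamA := by positivity
  have hyr : 0 < -dB*(PA*LB^2*lamA + t^2*LA^3*LB^2*RA) := by
    have : 0 < PA*LB^2*lamA + t^2*LA^3*LB^2*RA := by positivity
    nlinarith
  constructor
  · rcases le_or_gt x 0 with h | h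
    · have hc := mul_nonpos_of_nonneg_of_nonpos hD h
      rw [hx] at hc; linarith
    · exact h
  · rcases le_or_gt y 0 with h | h
    · have hc := mul_nonpos_of_nonneg_of_nonpos hD h
      rw [hy] at hc; linarith
    · exact h

set_option maxHeartbeats 1000000 in
theorem BPR_comparative_statics_conflicting
    (lam lam' c c' : ℝ → ℝ)
    (hlamDeriv : ∀ α ∈ Set.Icc (0:ℝ) 1, HasDerivAt lam (lam' α) α)
    (hlam'Cont : ContinuousOn lam' (Set.Icc (0:ℝ) 1))
    (hlam0 : lam 0 = 0) (hlam1 : lam 1 = 1)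
    (hlam'pos : ∀ α ∈ Set.Icc (0:ℝ) 1, 0 < lam' α)
    (hlam'anti : ∀ x ∈ Set.Icc (0:ℝ) 1, ∀ y ∈ Set.Icc (0:ℝ) 1, x ≤ y → lam' y ≤ lam' x)
    (hcDeriv : ∀ α ∈ Set.Ico (0:ℝ) 1, HasDerivAt c (c' α) α)
    (hc'Cont : ContinuousOn c' (Set.Ico (0:ℝ) 1))
    (hc0 : c 0 = 0)
    (hc'nonneg : ∀ α ∈ Set.Ico (0:ℝ) 1, 0 ≤ c' α)
    (hc'strictMono : ∀ x ∈ Set.Ico (0:ℝ) 1, ∀ y ∈ Set.Ico (0:ℝ) 1, x < y → c' x < c' y)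
    (hc'top : Filter.Tendsto c' (nhdsWithin 1 (Set.Iio 1)) Filter.atTop)
    (lam'' c'' : ℝ → ℝ)
    (hlam'Deriv : ∀ α ∈ Set.Icc (0:ℝ) 1, HasDerivAt lam' (lam'' α) α)
    (hlam''Cont : ContinuousOn lam'' (Set.Icc (0:ℝ) 1))
    (hc'Deriv : ∀ α ∈ Set.Ico (0:ℝ) 1, HasDerivAt c' (c'' α) α)
    (hc''Cont : ContinuousOn c'' (Set.Ico (0:ℝ) 1))
    (dB : ℝ) (hdB : dB < 0)
    (lo hi : ℝ) (hsub : Set.Ioo lo hi ⊆ Set.Ioi (0:ℝ))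
    (a a' b b' : ℝ → ℝ)
    (hda : ∀ t ∈ Set.Ioo lo hi, HasDerivAt a (a' t) t)
    (hdb : ∀ t ∈ Set.Ioo lo hi, HasDerivAt b (b' t) t)
    (hamem : ∀ t ∈ Set.Ioo lo hi, a t ∈ Set.Ioo (0:ℝ) 1)
    (hbmem : ∀ t ∈ Set.Ioo lo hi, b t ∈ Set.Ioo (0:ℝ) 1)
    (hfocA : ∀ t ∈ Set.Ioo lo hi, fFun lam lam' c' t (a t) = hFun lam t dB (b t))
    (hfocB : ∀ t ∈ Set.Ioo lo hi, fFun lam lam' c' dB (b t) = hFun lam dB t (a t)) :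
    ∀ t ∈ Set.Ioo lo hi, 0 < a' t ∧ 0 < b' t := by
  intro t ht
  have ht0 : 0 < t := hsub ht
  have hAmem := hamem t ht
  have hBmem := hbmem t ht
  have hAIcc : a t ∈ Set.Icc (0:ℝ) 1 := ⟨hAmem.1.le, hAmem.2.le⟩
  have hBIcc : b t ∈ Set.Icc (0:ℝ) 1 := ⟨hBmem.1.le, hBmem.2.le⟩
  have hAIco : a t ∈ Set.Ico (0:ℝ) 1 := ⟨hAmem.1.le, hAmem.2⟩
  have hBIco : b t ∈ Set.Ico (0:ℝ) 1 := ⟨hBmem.1.le, hBmem.2⟩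
  have hLA : 0 < lam' (a t) := hlam'pos _ hAIcc
  have hLB : 0 < lam' (b t) := hlam'pos _ hBIcc
  have hCA : 0 < c' (a t) :=
    lt_of_le_of_lt (hc'nonneg 0 ⟨le_rfl, one_pos⟩) (hc'strictMono 0 ⟨le_rfl, one_pos⟩ _ hAIco hAmem.1)
  have hCB : 0 < c' (b t) :=
    lt_of_le_of_lt (hc'nonneg 0 ⟨le_rfl, one_pos⟩) (hc'strictMono 0 ⟨le_rfl, one_pos⟩ _ hBIco hBmem.1)
  have hlamCont : ContinuousOn lam (Set.Icc 0 1) :=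
    fun x hx => (hlamDeriv x hx).continuousAt.continuousWithinAt
  have hlamSM : StrictMonoOn lam (Set.Icc 0 1) := by
    refine strictMonoOn_of_deriv_pos (convex_Icc 0 1) hlamCont ?_
    intro x hx
    rw [interior_Icc] at hx
    rw [(hlamDeriv x ⟨hx.1.le, hx.2.le⟩).deriv]
    exact hlam'pos x ⟨hx.1.le, hx.2.le⟩
  have hlamA0 : 0 < lam (a t) := by
    have := hlamSM (Set.left_mem_Icc.2 zero_le_one) hAIcc hAmem.1; linarith [hlam0 ▸ this]
  have hlamA1 : lam (a t) < 1 := by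
    have := hlamSM hAIcc (Set.right_mem_Icc.2 zero_le_one) hAmem.2; linarith [hlam1 ▸ this]
  have hlamB0 : 0 < lam (b t) := by
    have := hlamSM (Set.left_mem_Icc.2 zero_le_one) hBIcc hBmem.1; linarith [hlam0 ▸ this]
  have hlamB1 : lam (b t) < 1 := by
    have := hlamSM hBIcc (Set.right_mem_Icc.2 zero_le_one) hBmem.2; linarith [hlam1 ▸ this]
  have hC2A : 0 ≤ c'' (a t) := by
    refine deriv_nonneg_of_monoOn hAmem (fun p hp q hq hpq => ?_) (hc'Deriv _ hAIco)
    rcases hpq.lt_or_eq with h | h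
    · exact (hc'strictMono p ⟨hp.1.le, hp.2⟩ q ⟨hq.1.le, hq.2⟩ h).le
    · rw [h]
  have hC2B : 0 ≤ c'' (b t) := by
    refine deriv_nonneg_of_monoOn hBmem (fun p hp q hq hpq => ?_) (hc'Deriv _ hBIco)
    rcases hpq.lt_or_eq with h | h
    · exact (hc'strictMono p ⟨hp.1.le, hp.2⟩ q ⟨hq.1.le, hq.2⟩ h).le
    · rw [h]
  have hL2A : lam'' (a t) ≤ 0 := by
    have := deriv_nonneg_of_monoOn (f := fun x => -lam' x) hAmem
      (fun p hp q hq hpq => by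
        simp only [neg_le_neg_iff]
        exact hlam'anti p ⟨hp.1.le, hp.2.le⟩ q ⟨hq.1.le, hq.2.le⟩ hpq)
      ((hlam'Deriv _ hAIcc).neg)
    linarith
  have hL2B : lam'' (b t) ≤ 0 := by
    have := deriv_nonneg_of_monoOn (f := fun x => -lam' x) hBmem
      (fun p hp q hq hpq => by
        simp only [neg_le_neg_iff]
        exact hlam'anti p ⟨hp.1.le, hp.2.le⟩ q ⟨hq.1.le, hq.2.le⟩ hpq)
      ((hlam'Deriv _ hBIcc).neg)
    linarith
  have hda' := hda t ht
  have hdb' := hdb t ht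
  have hlam_a : HasDerivAt (fun s => lam (a s)) (lam' (a t) * a' t) t :=
    (hlamDeriv (a t) hAIcc).comp t hda'
  have hlam_b : HasDerivAt (fun s => lam (b s)) (lam' (b t) * b' t) t :=
    (hlamDeriv (b t) hBIcc).comp t hdb'
  have hc'_a : HasDerivAt (fun s => c' (a s)) (c'' (a t) * a' t) t :=
    (hc'Deriv (a t) hAIco).comp t hda'
  have hc'_b : HasDerivAt (fun s => c' (b s)) (c'' (b t) * b' t) t :=
    (hc'Deriv (b t) hBIco).comp t hdb'
  have hlam'_a : HasDerivAt (fun s => lam' (a s)) (lam'' (a t) * a' t) t :=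
    (hlam'Deriv (a t) hAIcc).comp t hda'
  have hlam'_b : HasDerivAt (fun s => lam' (b s)) (lam'' (b t) * b' t) t :=
    (hlam'Deriv (b t) hBIcc).comp t hdb'
  have hqA : HasDerivAt (fun s => c' (a s) / lam' (a s))
      ((c'' (a t) * a' t * lam' (a t) - c' (a t) * (lam'' (a t) * a' t)) / lam' (a t) ^ 2) t :=
    hc'_a.div hlam'_a hLA.ne'
  have hqB : HasDerivAt (fun s => c' (b s) / lam' (b s))
      ((c'' (b t) * b' t * lam' (b t) - c' (b t) * (lam'' (b t) * b' t)) / lam' (b t) ^ 2) t :=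
    hc'_b.div hlam'_b hLB.ne'
  have hcoef : HasDerivAt (fun s : ℝ => 2 / s ^ 2)
      ((0 * t ^ 2 - 2 * (↑2 * t ^ 1)) / (t ^ 2) ^ 2) t :=
    (hasDerivAt_const t (2:ℝ)).div (hasDerivAt_pow 2 t) (pow_ne_zero 2 ht0.ne')
  have hG1 : HasDerivAt (fun s => fFun lam lam' c' s (a s) - hFun lam s dB (b s))
      ((lam' (a t) * a' t +
        (((0 * t ^ 2 - 2 * (↑2 * t ^ 1)) / (t ^ 2) ^ 2) * (c' (a t) / lam' (a t)) +
          (2 / t ^ 2) *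
            ((c'' (a t) * a' t * lam' (a t) - c' (a t) * (lam'' (a t) * a' t)) / lam' (a t) ^ 2))) -
       (0 - (lam' (b t) * b' t * dB * t - lam (b t) * dB * 1) / t ^ 2)) t := by
    have h1 : HasDerivAt (fun s => fFun lam lam' c' s (a s))
        (lam' (a t) * a' t +
          (((0 * t ^ 2 - 2 * (↑2 * t ^ 1)) / (t ^ 2) ^ 2) * (c' (a t) / lam' (a t)) +
            (2 / t ^ 2) *
              ((c'' (a t) * a' t * lam' (a t) - c' (a t) * (lam'' (a t) * a' t)) / lam' (a t) ^ 2))) t := by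
      simpa [fFun, Pi.add_def, Pi.mul_def] using hlam_a.add (hcoef.mul hqA)
    have h2 : HasDerivAt (fun s => hFun lam s dB (b s))
        (0 - (lam' (b t) * b' t * dB * t - lam (b t) * dB * 1) / t ^ 2) t := by
      simpa [hFun, Pi.sub_def, Pi.div_def] using
        (hasDerivAt_const t (2:ℝ)).sub (((hlam_b.mul_const dB).div (hasDerivAt_id' (𝕜 := ℝ) t) ht0.ne'))
    exact h1.sub h2
  have hG2 : HasDerivAt (fun s => fFun lam lam' c' dB (b s) - hFun lam dB s (a s))
      ((lam' (b t) * b' t +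
        (2 / dB ^ 2) *
          ((c'' (b t) * b' t * lam' (b t) - c' (b t) * (lam'' (b t) * b' t)) / lam' (b t) ^ 2)) -
       (0 - (lam' (a t) * a' t * t + lam (a t) * 1) / dB)) t := by
    have h1 : HasDerivAt (fun s => fFun lam lam' c' dB (b s))
        (lam' (b t) * b' t +
          (2 / dB ^ 2) *
            ((c'' (b t) * b' t * lam' (b t) - c' (b t) * (lam'' (b t) * b' t)) / lam' (b t) ^ 2)) t := by
      simpa [fFun, Pi.add_def] using hlam_b.add (hqB.const_mul (2 / dB ^ 2))
    have h2 : HasDerivAt (fun s => hFun lam dB s (a s))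
        (0 - (lam' (a t) * a' t * t + lam (a t) * 1) / dB) t := by
      simpa [hFun, Pi.sub_def] using
        (hasDerivAt_const t (2:ℝ)).sub ((hlam_a.mul (hasDerivAt_id' (𝕜 := ℝ) t)).div_const dB)
    exact h1.sub h2
  -- the equilibrium functions vanish on the open interval
  have hev1 : (fun s => fFun lam lam' c' s (a s) - hFun lam s dB (b s)) =ᶠ[nhds t]
      (fun _ => (0:ℝ)) := by
    filter_upwards [isOpen_Ioo.mem_nhds ht] with s hs
    rw [hfocA s hs, sub_self]
  have hev2 : (fun s => fFun lam lam' c' dB (b s) - hFun lam dB s (a s)) =ᶠ[nhds t]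
      (fun _ => (0:ℝ)) := by
    filter_upwards [isOpen_Ioo.mem_nhds ht] with s hs
    rw [hfocB s hs, sub_self]
  have hz1 := (hasDerivAt_const t (0:ℝ)).unique (hG1.congr_of_eventuallyEq hev1.symm)
  have hz2 := (hasDerivAt_const t (0:ℝ)).unique (hG2.congr_of_eventuallyEq hev2.symm)
  -- clean polynomial forms
  have hLAne : lam' (a t) ≠ 0 := hLA.ne'
  have hLBne : lam' (b t) ≠ 0 := hLB.ne'
  have htne : t ≠ 0 := ht0.ne'
  have hdBne : dB ≠ 0 := hdB.ne
  have hE1p : (t^3*(lam' (a t))^3 + 2*t*(c'' (a t) * lam' (a t) - c' (a t) * lam'' (a t))) * a' t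
      + dB*(lam' (b t))*t^2*(lam' (a t))^2 * b' t
      = 4*(c' (a t))*(lam' (a t)) + lam (b t)*dB*t*(lam' (a t))^2 := by
    have hne : t^5 * lam' (a t) ≠ 0 := by positivity
    rw [← sub_eq_zero]
    refine (mul_eq_zero.mp ?_).resolve_left hne
    linear_combination (norm := skip) (-(t^8*lam' (a t)^3)) * hz1
    field_simp
    ring
  have hE2p : (dB^2*(lam' (b t))^3 + 2*(c'' (b t) * lam' (b t) - c' (b t) * lam'' (b t))) * b' t
      + dB*t*(lam' (a t))*(lam' (b t))^2 * a' t
      = -(dB*(lam' (b t))^2*(lam (a t))) := by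
    have hne : dB ≠ 0 := hdB.ne
    rw [← sub_eq_zero]
    refine (mul_eq_zero.mp ?_).resolve_left hne
    linear_combination (norm := skip) (-(dB^3*lam' (b t)^2)) * hz2
    field_simp
    ring
  have hfA := hfocA t ht
  simp only [fFun, hFun] at hfA
  have hfAp : lam (a t)*t^2*(lam' (a t)) + 2*(c' (a t))
      = 2*t^2*(lam' (a t)) - lam (b t)*dB*t*(lam' (a t)) := by
    have hne : t ≠ 0 := ht0.ne'
    rw [← sub_eq_zero]
    refine (mul_eq_zero.mp ?_).resolve_left hne
    linear_combination (norm := skip) (t^3*lam' (a t)) * hfA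
    field_simp
    ring
  exact endgame t dB (a' t) (b' t) (lam' (a t)) (lam' (b t)) (lam (a t)) (lam (b t))
    (c'' (a t) * lam' (a t) - c' (a t) * lam'' (a t))
    (c'' (b t) * lam' (b t) - c' (b t) * lam'' (b t))
    (c' (a t)) ht0 hdB hLA hLB hlamA0 hlamA1 hlamB0
    (by nlinarith [mul_nonneg hC2A hLA.le, mul_nonpos_of_nonneg_of_nonpos hCA.le hL2A])
    (by nlinarith [mul_nonneg hC2B hLB.le, mul_nonpos_of_nonneg_of_nonpos hCB.le hL2B])
    hCA hE1p hE2p hfAp
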